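/- The class of finite ω-partite tournaments has the amalgamation property with automorphisms (APA): given ω-partite tournaments A ⊆ B₁ and A ⊆ B₂ with B₁ ∩ B₂ = A, there is an ω-partite tournament C on B₁ ∪ B₂ extending both B₁ and B₂ such that every pair of automorphisms f₁ of B₁ and f₂ of B₂ agreeing on A extends to a common automorphism f₁ ∪ f₂ of C. -/
import Mathlib


/-- An ω-partite tournament on vertex set `V`: a directed graph (irreflexive,
antisymmetric) in which non-adjacency is an equivalence relation; its classes are the
parts, so any two vertices in different parts are joined by exactly one directed edge
and there are no edges within a part. -/
structure PartiteTournament (V : Type*) where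
  E : V → V → Prop
  asymm : ∀ u v, E u v → ¬ E v u
  nonadj_equiv : Equivalence (fun u v => ¬ E u v ∧ ¬ E v u)


namespace APAaux

variable {V : Type*}

/-- Lift the edge relation of a tournament on a subset to the ambient type. -/
def liftE {B : Set V} (T : PartiteTournament B) (u v : V) : Prop :=
  ∃ (hu : u ∈ B) (hv : v ∈ B), T.E ⟨u, hu⟩ ⟨v, hv⟩

/-- Lifted non-adjacency. -/
def liftN {B : Set V} (T : PartiteTournament B) (u v : V) : Prop :=
  ¬ liftE T u v ∧ ¬ liftE T v u

lemma liftE_iff {B : Set V} (T : PartiteTournament B) {u v : V} (hu : u ∈ B) (hv : v ∈ B) :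
    liftE T u v ↔ T.E ⟨u, hu⟩ ⟨v, hv⟩ :=
  ⟨fun ⟨_, _, h⟩ => h, fun h => ⟨hu, hv, h⟩⟩

lemma liftE.mem_left {B : Set V} {T : PartiteTournament B} {u v : V} (h : liftE T u v) :
    u ∈ B := h.1

lemma liftE.mem_right {B : Set V} {T : PartiteTournament B} {u v : V} (h : liftE T u v) :
    v ∈ B := h.2.1

lemma liftE.asymm {B : Set V} {T : PartiteTournament B} {u v : V} (h : liftE T u v) :
    ¬ liftE T v u := by
  obtain ⟨hu, hv, h⟩ := h
  intro h'
  exact T.asymm _ _ h ((liftE_iff T hv hu).1 h')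

lemma liftN_iff {B : Set V} (T : PartiteTournament B) {u v : V} (hu : u ∈ B) (hv : v ∈ B) :
    liftN T u v ↔ (¬ T.E ⟨u, hu⟩ ⟨v, hv⟩ ∧ ¬ T.E ⟨v, hv⟩ ⟨u, hu⟩) := by
  unfold liftN
  rw [liftE_iff T hu hv, liftE_iff T hv hu]

lemma liftN_refl {B : Set V} (T : PartiteTournament B) {u : V} (hu : u ∈ B) :
    liftN T u u :=
  (liftN_iff T hu hu).2 (T.nonadj_equiv.refl ⟨u, hu⟩)

lemma liftN_symm {B : Set V} {T : PartiteTournament B} {u v : V} (h : liftN T u v) :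
    liftN T v u := ⟨h.2, h.1⟩

lemma liftN_trans {B : Set V} (T : PartiteTournament B) {u v w : V}
    (hu : u ∈ B) (hv : v ∈ B) (hw : w ∈ B)
    (h1 : liftN T u v) (h2 : liftN T v w) : liftN T u w :=
  (liftN_iff T hu hw).2
    (T.nonadj_equiv.trans ((liftN_iff T hu hv).1 h1) ((liftN_iff T hv hw).1 h2))

section Two

variable {B₁ B₂ : Set V} (T₁ : PartiteTournament B₁) (T₂ : PartiteTournament B₂)

/-- `u` (in `B₁`) and `v` (in `B₂`) lie in the same merged part. -/
def sp (u v : V) : Prop :=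
  ∃ a, a ∈ B₁ ∧ a ∈ B₂ ∧ liftN T₁ u a ∧ liftN T₂ a v

/-- The edge relation of the amalgam. -/
def ec (u v : V) : Prop :=
  liftE T₁ u v ∨ liftE T₂ u v ∨
    (u ∈ B₁ ∧ u ∉ B₂ ∧ v ∈ B₂ ∧ v ∉ B₁ ∧ ¬ sp T₁ T₂ u v)

/-- The non-adjacency (same part) relation of the amalgam, spelled out. -/
def R (u v : V) : Prop :=
  (u ∈ B₁ ∧ v ∈ B₁ ∧ liftN T₁ u v) ∨
  (u ∈ B₂ ∧ v ∈ B₂ ∧ liftN T₂ u v) ∨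
  (u ∈ B₁ ∧ u ∉ B₂ ∧ v ∈ B₂ ∧ v ∉ B₁ ∧ sp T₁ T₂ u v) ∨
  (v ∈ B₁ ∧ v ∉ B₂ ∧ u ∈ B₂ ∧ u ∉ B₁ ∧ sp T₁ T₂ v u)

variable (hagree : ∀ (u v : V) (hu₁ : u ∈ B₁) (hu₂ : u ∈ B₂) (hv₁ : v ∈ B₁) (hv₂ : v ∈ B₂),
      T₁.E ⟨u, hu₁⟩ ⟨v, hv₁⟩ ↔ T₂.E ⟨u, hu₂⟩ ⟨v, hv₂⟩)

include hagree

lemma liftE_agree {u v : V} (hu₁ : u ∈ B₁) (hu₂ : u ∈ B₂) (hv₁ : v ∈ B₁) (hv₂ : v ∈ B₂) :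
    liftE T₁ u v ↔ liftE T₂ u v := by
  rw [liftE_iff T₁ hu₁ hv₁, liftE_iff T₂ hu₂ hv₂]
  exact hagree u v hu₁ hu₂ hv₁ hv₂

lemma liftN_agree {u v : V} (hu₁ : u ∈ B₁) (hu₂ : u ∈ B₂) (hv₁ : v ∈ B₁) (hv₂ : v ∈ B₂) :
    liftN T₁ u v ↔ liftN T₂ u v := by
  unfold liftN
  rw [liftE_agree T₁ T₂ hagree hu₁ hu₂ hv₁ hv₂, liftE_agree T₁ T₂ hagree hv₁ hv₂ hu₁ hu₂]

lemma ec_iff_left {u v : V} (hu : u ∈ B₁) (hv : v ∈ B₁) :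
    ec T₁ T₂ u v ↔ liftE T₁ u v := by
  constructor
  · rintro (h | h | h)
    · exact h
    · exact (liftE_agree T₁ T₂ hagree hu h.1 hv h.2.1).2 h
    · exact absurd hv h.2.2.2.1
  · exact fun h => Or.inl h

lemma ec_iff_right {u v : V} (hu : u ∈ B₂) (hv : v ∈ B₂) :
    ec T₁ T₂ u v ↔ liftE T₂ u v := by
  constructor
  · rintro (h | h | h)
    · exact (liftE_agree T₁ T₂ hagree h.1 hu h.2.1 hv).1 h
    · exact h
    · exact absurd hu h.2.1
  · exact fun h => Or.inr (Or.inl h)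

omit hagree

lemma ec_iff_cross {u v : V} (hu₁ : u ∈ B₁) (hu₂ : u ∉ B₂) (hv₂ : v ∈ B₂) (hv₁ : v ∉ B₁) :
    ec T₁ T₂ u v ↔ ¬ sp T₁ T₂ u v := by
  constructor
  · rintro (h | h | h)
    · exact absurd h.2.1 hv₁
    · exact absurd h.1 hu₂
    · exact h.2.2.2.2
  · exact fun h => Or.inr (Or.inr ⟨hu₁, hu₂, hv₂, hv₁, h⟩)

lemma not_ec_cross' {u v : V} (hu₂ : u ∉ B₂) (hv₁ : v ∉ B₁) :
    ¬ ec T₁ T₂ v u := by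
  rintro (h | h | h)
  · exact hv₁ h.mem_left
  · exact hu₂ h.mem_right
  · exact hu₂ h.2.2.1

end Two

section Two2

variable {B₁ B₂ : Set V} (T₁ : PartiteTournament B₁) (T₂ : PartiteTournament B₂)

variable (hagree : ∀ (u v : V) (hu₁ : u ∈ B₁) (hu₂ : u ∈ B₂) (hv₁ : v ∈ B₁) (hv₂ : v ∈ B₂),
      T₁.E ⟨u, hu₁⟩ ⟨v, hv₁⟩ ↔ T₂.E ⟨u, hu₂⟩ ⟨v, hv₂⟩)

include hagree

lemma ec_asymm {u v : V} (h : ec T₁ T₂ u v) : ¬ ec T₁ T₂ v u := by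
  rcases h with h | h | h
  · rintro (h' | h' | h')
    · exact h.asymm h'
    · exact ((liftE_agree T₁ T₂ hagree h.mem_left h'.mem_right h.mem_right
        h'.mem_left).1 h).asymm h'
    · exact h'.2.2.2.1 h.mem_left
  · rintro (h' | h' | h')
    · exact ((liftE_agree T₁ T₂ hagree h'.mem_left h.mem_right h'.mem_right
        h.mem_left).1 h').asymm h
    · exact h.asymm h'
    · exact h'.2.1 h.mem_right
  · exact not_ec_cross' T₁ T₂ h.2.1 h.2.2.2.1

omit hagree

lemma R_refl {u : V} (hu : u ∈ B₁ ∪ B₂) : R T₁ T₂ u u := by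
  rcases hu with hu | hu
  · exact Or.inl ⟨hu, hu, liftN_refl T₁ hu⟩
  · exact Or.inr (Or.inl ⟨hu, hu, liftN_refl T₂ hu⟩)

lemma R_symm {u v : V} (h : R T₁ T₂ u v) : R T₁ T₂ v u := by
  rcases h with h | h | h | h
  · exact Or.inl ⟨h.2.1, h.1, liftN_symm h.2.2⟩
  · exact Or.inr (Or.inl ⟨h.2.1, h.1, liftN_symm h.2.2⟩)
  · exact Or.inr (Or.inr (Or.inr h))
  · exact Or.inr (Or.inr (Or.inl h))

include hagree

lemma R_trans {x y z : V} (h : R T₁ T₂ x y) (h' : R T₁ T₂ y z) : R T₁ T₂ x z := by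
  have hN : ∀ {u v : V}, u ∈ B₁ → u ∈ B₂ → v ∈ B₁ → v ∈ B₂ →
      (liftN T₁ u v ↔ liftN T₂ u v) :=
    fun h1 h2 h3 h4 => liftN_agree T₁ T₂ hagree h1 h2 h3 h4
  rcases h with ⟨hx1, hy1, n⟩ | ⟨hx2, hy2, n⟩ | ⟨hx1, hx2, hy2, hy1, a, ha1, ha2, na1, na2⟩ |
      ⟨hy1, hy2, hx2, hx1, a, ha1, ha2, na1, na2⟩ <;>
    rcases h' with ⟨hy1', hz1, n'⟩ | ⟨hy2', hz2, n'⟩ |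
      ⟨hy1', hy2', hz2, hz1, b, hb1, hb2, nb1, nb2⟩ |
      ⟨hz1, hz2, hy2', hy1', b, hb1, hb2, nb1, nb2⟩
  -- (d1,d1)
  · exact Or.inl ⟨hx1, hz1, liftN_trans T₁ hx1 hy1 hz1 n n'⟩
  -- (d1,d2)
  · by_cases hx2 : x ∈ B₂
    · exact Or.inr (Or.inl ⟨hx2, hz2,
        liftN_trans T₂ hx2 hy2' hz2 ((hN hx1 hx2 hy1 hy2').1 n) n'⟩)
    · by_cases hz1 : z ∈ B₁
      · exact Or.inl ⟨hx1, hz1,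
          liftN_trans T₁ hx1 hy1 hz1 n ((hN hy1 hy2' hz1 hz2).2 n')⟩
      · exact Or.inr (Or.inr (Or.inl ⟨hx1, hx2, hz2, hz1, y, hy1, hy2', n, n'⟩))
  -- (d1,d3)
  · by_cases hx2 : x ∈ B₂
    · have na : liftN T₂ x b := (hN hx1 hx2 hb1 hb2).1 (liftN_trans T₁ hx1 hy1' hb1 n nb1)
      exact Or.inr (Or.inl ⟨hx2, hz2, liftN_trans T₂ hx2 hb2 hz2 na nb2⟩)
    · exact Or.inr (Or.inr (Or.inl ⟨hx1, hx2, hz2, hz1, b, hb1, hb2,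
        liftN_trans T₁ hx1 hy1' hb1 n nb1, nb2⟩))
  -- (d1,d4)
  · exact absurd hy1 hy1'
  -- (d2,d1)
  · by_cases hx1 : x ∈ B₁
    · exact Or.inl ⟨hx1, hz1, liftN_trans T₁ hx1 hy1' hz1 ((hN hx1 hx2 hy1' hy2).2 n) n'⟩
    · by_cases hz2 : z ∈ B₂
      · exact Or.inr (Or.inl ⟨hx2, hz2,
          liftN_trans T₂ hx2 hy2 hz2 n ((hN hy1' hy2 hz1 hz2).1 n')⟩)
      · exact Or.inr (Or.inr (Or.inr ⟨hz1, hz2, hx2, hx1, y, hy1', hy2,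
          liftN_symm n', liftN_symm n⟩))
  -- (d2,d2)
  · exact Or.inr (Or.inl ⟨hx2, hz2, liftN_trans T₂ hx2 hy2 hz2 n n'⟩)
  -- (d2,d3)
  · exact absurd hy2 hy2'
  -- (d2,d4)
  · have nxb : liftN T₂ x b := liftN_trans T₂ hx2 hy2 hb2 n (liftN_symm nb2)
    by_cases hx1 : x ∈ B₁
    · exact Or.inl ⟨hx1, hz1, liftN_trans T₁ hx1 hb1 hz1
        ((hN hx1 hx2 hb1 hb2).2 nxb) (liftN_symm nb1)⟩
    · exact Or.inr (Or.inr (Or.inr ⟨hz1, hz2, hx2, hx1, b, hb1, hb2, nb1, liftN_symm nxb⟩))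
  -- (d3,d1)
  · exact absurd hy1' hy1
  -- (d3,d2)
  · have naz : liftN T₂ a z := liftN_trans T₂ ha2 hy2' hz2 na2 n'
    by_cases hz1 : z ∈ B₁
    · exact Or.inl ⟨hx1, hz1, liftN_trans T₁ hx1 ha1 hz1 na1 ((hN ha1 ha2 hz1 hz2).2 naz)⟩
    · exact Or.inr (Or.inr (Or.inl ⟨hx1, hx2, hz2, hz1, a, ha1, ha2, na1, naz⟩))
  -- (d3,d3)
  · exact absurd hy1' hy1
  -- (d3,d4)
  · have nab : liftN T₂ a b := liftN_trans T₂ ha2 hy2' hb2 na2 (liftN_symm nb2)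
    exact Or.inl ⟨hx1, hz1, liftN_trans T₁ hx1 hb1 hz1
      (liftN_trans T₁ hx1 ha1 hb1 na1 ((hN ha1 ha2 hb1 hb2).2 nab)) (liftN_symm nb1)⟩
  -- (d4,d1)
  · have nza : liftN T₁ z a := liftN_trans T₁ hz1 hy1 ha1 (liftN_symm n') na1
    by_cases hz2 : z ∈ B₂
    · exact Or.inr (Or.inl ⟨hx2, hz2, liftN_symm
        (liftN_trans T₂ hz2 ha2 hx2 ((hN hz1 hz2 ha1 ha2).1 nza) na2)⟩)
    · exact Or.inr (Or.inr (Or.inr ⟨hz1, hz2, hx2, hx1, a, ha1, ha2, nza, na2⟩))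
  -- (d4,d2)
  · exact absurd hy2' hy2
  -- (d4,d3)
  · have nab : liftN T₁ a b := liftN_trans T₁ ha1 hy1 hb1 (liftN_symm na1) nb1
    exact Or.inr (Or.inl ⟨hx2, hz2, liftN_trans T₂ hx2 hb2 hz2
      (liftN_trans T₂ hx2 ha2 hb2 (liftN_symm na2) ((hN ha1 ha2 hb1 hb2).1 nab)) nb2⟩)
  -- (d4,d4)
  · exact absurd hy1 hy1'

lemma nc_iff_R_left {u v : V} (hu1 : u ∈ B₁) (hv1 : v ∈ B₁) :
    (¬ ec T₁ T₂ u v ∧ ¬ ec T₁ T₂ v u) ↔ R T₁ T₂ u v := by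
  have key : (¬ ec T₁ T₂ u v ∧ ¬ ec T₁ T₂ v u) ↔ liftN T₁ u v := by
    unfold liftN
    rw [ec_iff_left T₁ T₂ hagree hu1 hv1, ec_iff_left T₁ T₂ hagree hv1 hu1]
  rw [key]
  constructor
  · exact fun h => Or.inl ⟨hu1, hv1, h⟩
  · rintro (h | h | h | h)
    · exact h.2.2
    · exact (liftN_agree T₁ T₂ hagree hu1 h.1 hv1 h.2.1).2 h.2.2
    · exact absurd hv1 h.2.2.2.1
    · exact absurd hu1 h.2.2.2.1

lemma nc_iff_R_right {u v : V} (hu2 : u ∈ B₂) (hv2 : v ∈ B₂) :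
    (¬ ec T₁ T₂ u v ∧ ¬ ec T₁ T₂ v u) ↔ R T₁ T₂ u v := by
  have key : (¬ ec T₁ T₂ u v ∧ ¬ ec T₁ T₂ v u) ↔ liftN T₂ u v := by
    unfold liftN
    rw [ec_iff_right T₁ T₂ hagree hu2 hv2, ec_iff_right T₁ T₂ hagree hv2 hu2]
  rw [key]
  constructor
  · exact fun h => Or.inr (Or.inl ⟨hu2, hv2, h⟩)
  · rintro (h | h | h | h)
    · exact (liftN_agree T₁ T₂ hagree h.1 hu2 h.2.1 hv2).1 h.2.2
    · exact h.2.2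
    · exact absurd hu2 h.2.1
    · exact absurd hv2 h.2.1

omit hagree

lemma nc_iff_R_cross {u v : V} (hu1 : u ∈ B₁) (hu2 : u ∉ B₂) (hv2 : v ∈ B₂) (hv1 : v ∉ B₁) :
    (¬ ec T₁ T₂ u v ∧ ¬ ec T₁ T₂ v u) ↔ R T₁ T₂ u v := by
  constructor
  · rintro ⟨h, -⟩
    rw [ec_iff_cross T₁ T₂ hu1 hu2 hv2 hv1, not_not] at h
    exact Or.inr (Or.inr (Or.inl ⟨hu1, hu2, hv2, hv1, h⟩))
  · rintro (h | h | h | h)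
    · exact absurd h.2.1 hv1
    · exact absurd h.1 hu2
    · exact ⟨by rw [ec_iff_cross T₁ T₂ hu1 hu2 hv2 hv1]; exact not_not.2 h.2.2.2.2,
        not_ec_cross' T₁ T₂ hu2 hv1⟩
    · exact absurd h.2.2.1 hu2

include hagree

/-- Non-adjacency in the amalgam coincides with `R`. -/
lemma nc_iff_R {u v : V} (hu : u ∈ B₁ ∪ B₂) (hv : v ∈ B₁ ∪ B₂) :
    (¬ ec T₁ T₂ u v ∧ ¬ ec T₁ T₂ v u) ↔ R T₁ T₂ u v := by
  by_cases hu1 : u ∈ B₁ <;> by_cases hv1 : v ∈ B₁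
  · exact nc_iff_R_left T₁ T₂ hagree hu1 hv1
  · have hv2 : v ∈ B₂ := hv.resolve_left hv1
    by_cases hu2 : u ∈ B₂
    · exact nc_iff_R_right T₁ T₂ hagree hu2 hv2
    · exact nc_iff_R_cross T₁ T₂ hu1 hu2 hv2 hv1
  · have hu2 : u ∈ B₂ := hu.resolve_left hu1
    by_cases hv2 : v ∈ B₂
    · exact nc_iff_R_right T₁ T₂ hagree hu2 hv2
    · rw [and_comm]
      rw [nc_iff_R_cross T₁ T₂ hv1 hv2 hu2 hu1]
      exact ⟨fun h => R_symm T₁ T₂ h, fun h => R_symm T₁ T₂ h⟩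
  · have hu2 : u ∈ B₂ := hu.resolve_left hu1
    have hv2 : v ∈ B₂ := hv.resolve_left hv1
    exact nc_iff_R_right T₁ T₂ hagree hu2 hv2

end Two2

section Auto

variable {B₁ B₂ : Set V} (T₁ : PartiteTournament B₁) (T₂ : PartiteTournament B₂)
variable (f₁ : B₁ ≃ B₁) (f₂ : B₂ ≃ B₂)

open Classical in
/-- The glued map on the ambient type. -/
noncomputable def g (v : V) : V :=
  if h : v ∈ B₁ then (f₁ ⟨v, h⟩ : V) else if h2 : v ∈ B₂ then (f₂ ⟨v, h2⟩ : V) else v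

lemma g_eq₁ {v : V} (h : v ∈ B₁) : g f₁ f₂ v = (f₁ ⟨v, h⟩ : V) := dif_pos h

lemma g_mem₁ {v : V} (h : v ∈ B₁) : g f₁ f₂ v ∈ B₁ := by
  rw [g_eq₁ f₁ f₂ h]; exact (f₁ ⟨v, h⟩).2

variable (hcomp : ∀ (u : V) (hu₁ : u ∈ B₁) (hu₂ : u ∈ B₂),
          (f₁ ⟨u, hu₁⟩ : V) = (f₂ ⟨u, hu₂⟩ : V))

include hcomp

lemma g_eq₂ {v : V} (h : v ∈ B₂) : g f₁ f₂ v = (f₂ ⟨v, h⟩ : V) := by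
  by_cases h1 : v ∈ B₁
  · rw [g_eq₁ f₁ f₂ h1, hcomp v h1 h]
  · unfold g
    rw [dif_neg h1, dif_pos h]

lemma g_mem₂ {v : V} (h : v ∈ B₂) : g f₁ f₂ v ∈ B₂ := by
  rw [g_eq₂ f₁ f₂ hcomp h]; exact (f₂ ⟨v, h⟩).2

/-- `g` maps `A = B₁ ∩ B₂` bijectively onto itself. -/
lemma g_bijOn_A [Finite V] : Set.BijOn (g f₁ f₂) (B₁ ∩ B₂) (B₁ ∩ B₂) := by
  have hmaps : Set.MapsTo (g f₁ f₂) (B₁ ∩ B₂) (B₁ ∩ B₂) := fun a ha =>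
    ⟨g_mem₁ f₁ f₂ ha.1, g_mem₂ f₁ f₂ hcomp ha.2⟩
  have hinj : Set.InjOn (g f₁ f₂) (B₁ ∩ B₂) := by
    intro a ha b hb hab
    rw [g_eq₁ f₁ f₂ ha.1, g_eq₁ f₁ f₂ hb.1] at hab
    have := f₁.injective (Subtype.ext hab)
    exact congrArg Subtype.val this
  exact ((Set.toFinite (B₁ ∩ B₂)).injOn_iff_bijOn_of_mapsTo hmaps).1 hinj

lemma g_mem₁_iff [Finite V] {v : V} (hv : v ∈ B₁ ∪ B₂) : g f₁ f₂ v ∈ B₁ ↔ v ∈ B₁ := by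
  constructor
  · intro h
    by_contra hv1
    have hv2 : v ∈ B₂ := hv.resolve_left hv1
    have hA : g f₁ f₂ v ∈ B₁ ∩ B₂ := ⟨h, g_mem₂ f₁ f₂ hcomp hv2⟩
    obtain ⟨a, ha, hav⟩ := (g_bijOn_A f₁ f₂ hcomp).surjOn hA
    have : a = v := by
      have h1 := g_eq₂ f₁ f₂ hcomp ha.2
      have h2 := g_eq₂ f₁ f₂ hcomp hv2
      rw [h1] at hav
      rw [h2] at hav
      exact congrArg Subtype.val (f₂.injective (Subtype.ext hav))
    exact hv1 (this ▸ ha.1)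
  · exact g_mem₁ f₁ f₂

lemma g_mem₂_iff [Finite V] {v : V} (hv : v ∈ B₁ ∪ B₂) : g f₁ f₂ v ∈ B₂ ↔ v ∈ B₂ := by
  constructor
  · intro h
    by_contra hv2
    have hv1 : v ∈ B₁ := hv.resolve_right hv2
    have hA : g f₁ f₂ v ∈ B₁ ∩ B₂ := ⟨g_mem₁ f₁ f₂ hv1, h⟩
    obtain ⟨a, ha, hav⟩ := (g_bijOn_A f₁ f₂ hcomp).surjOn hA
    have : a = v := by
      have h1 := g_eq₁ f₁ f₂ ha.1
      have h2 := g_eq₁ f₁ f₂ hv1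
      rw [h1] at hav
      rw [h2] at hav
      exact congrArg Subtype.val (f₁.injective (Subtype.ext hav))
    exact hv2 (this ▸ ha.2)
  · exact g_mem₂ f₁ f₂ hcomp

lemma g_injOn [Finite V] : Set.InjOn (g f₁ f₂) (B₁ ∪ B₂) := by
  intro u hu v hv huv
  by_cases hu1 : u ∈ B₁ <;> by_cases hv1 : v ∈ B₁
  · rw [g_eq₁ f₁ f₂ hu1, g_eq₁ f₁ f₂ hv1] at huv
    exact congrArg Subtype.val (f₁.injective (Subtype.ext huv))
  · exact absurd ((g_mem₁_iff f₁ f₂ hcomp hv).1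
      (huv ▸ g_mem₁ f₁ f₂ hu1)) hv1
  · exact absurd ((g_mem₁_iff f₁ f₂ hcomp hu).1
      (huv ▸ g_mem₁ f₁ f₂ hv1)) hu1
  · have hu2 : u ∈ B₂ := hu.resolve_left hu1
    have hv2 : v ∈ B₂ := hv.resolve_left hv1
    rw [g_eq₂ f₁ f₂ hcomp hu2, g_eq₂ f₁ f₂ hcomp hv2] at huv
    exact congrArg Subtype.val (f₂.injective (Subtype.ext huv))

variable (hf₁ : ∀ u v, T₁.E (f₁ u) (f₁ v) ↔ T₁.E u v)
variable (hf₂ : ∀ u v, T₂.E (f₂ u) (f₂ v) ↔ T₂.E u v)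

omit hcomp
include hf₁

lemma g_liftE₁ {u v : V} (hu : u ∈ B₁) (hv : v ∈ B₁) :
    liftE T₁ (g f₁ f₂ u) (g f₁ f₂ v) ↔ liftE T₁ u v := by
  rw [liftE_iff T₁ hu hv,
    liftE_iff T₁ (g_mem₁ f₁ f₂ hu) (g_mem₁ f₁ f₂ hv)]
  have e1 : (⟨g f₁ f₂ u, g_mem₁ f₁ f₂ hu⟩ : B₁) = f₁ ⟨u, hu⟩ :=
    Subtype.ext (g_eq₁ f₁ f₂ hu)
  have e2 : (⟨g f₁ f₂ v, g_mem₁ f₁ f₂ hv⟩ : B₁) = f₁ ⟨v, hv⟩ :=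
    Subtype.ext (g_eq₁ f₁ f₂ hv)
  rw [e1, e2]
  exact hf₁ _ _

lemma g_liftN₁ {u v : V} (hu : u ∈ B₁) (hv : v ∈ B₁) :
    liftN T₁ (g f₁ f₂ u) (g f₁ f₂ v) ↔ liftN T₁ u v := by
  unfold liftN
  rw [g_liftE₁ T₁ f₁ f₂ hf₁ hu hv, g_liftE₁ T₁ f₁ f₂ hf₁ hv hu]

omit hf₁
include hcomp hf₂

lemma g_liftE₂ {u v : V} (hu : u ∈ B₂) (hv : v ∈ B₂) :
    liftE T₂ (g f₁ f₂ u) (g f₁ f₂ v) ↔ liftE T₂ u v := by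
  rw [liftE_iff T₂ hu hv,
    liftE_iff T₂ (g_mem₂ f₁ f₂ hcomp hu) (g_mem₂ f₁ f₂ hcomp hv)]
  have e1 : (⟨g f₁ f₂ u, g_mem₂ f₁ f₂ hcomp hu⟩ : B₂) = f₂ ⟨u, hu⟩ :=
    Subtype.ext (g_eq₂ f₁ f₂ hcomp hu)
  have e2 : (⟨g f₁ f₂ v, g_mem₂ f₁ f₂ hcomp hv⟩ : B₂) = f₂ ⟨v, hv⟩ :=
    Subtype.ext (g_eq₂ f₁ f₂ hcomp hv)
  rw [e1, e2]
  exact hf₂ _ _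

lemma g_liftN₂ {u v : V} (hu : u ∈ B₂) (hv : v ∈ B₂) :
    liftN T₂ (g f₁ f₂ u) (g f₁ f₂ v) ↔ liftN T₂ u v := by
  unfold liftN
  rw [g_liftE₂ T₂ f₁ f₂ hcomp hf₂ hu hv, g_liftE₂ T₂ f₁ f₂ hcomp hf₂ hv hu]

include hf₁

lemma g_sp [Finite V] {u v : V} (hu : u ∈ B₁) (hv : v ∈ B₂) :
    sp T₁ T₂ (g f₁ f₂ u) (g f₁ f₂ v) ↔ sp T₁ T₂ u v := by
  constructor
  · rintro ⟨b, hb1, hb2, n1, n2⟩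
    obtain ⟨a, ha, hab⟩ := (g_bijOn_A f₁ f₂ hcomp).surjOn (⟨hb1, hb2⟩ : b ∈ B₁ ∩ B₂)
    refine ⟨a, ha.1, ha.2, ?_, ?_⟩
    · have := (g_liftN₁ T₁ f₁ f₂ hf₁ hu ha.1).1 (by rw [hab]; exact n1)
      exact this
    · exact (g_liftN₂ T₂ f₁ f₂ hcomp hf₂ ha.2 hv).1 (by rw [hab]; exact n2)
  · rintro ⟨a, ha1, ha2, n1, n2⟩
    exact ⟨g f₁ f₂ a, g_mem₁ f₁ f₂ ha1, g_mem₂ f₁ f₂ hcomp ha2,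
      (g_liftN₁ T₁ f₁ f₂ hf₁ hu ha1).2 n1, (g_liftN₂ T₂ f₁ f₂ hcomp hf₂ ha2 hv).2 n2⟩

lemma g_ec [Finite V] {u v : V} (hu : u ∈ B₁ ∪ B₂) (hv : v ∈ B₁ ∪ B₂) :
    ec T₁ T₂ (g f₁ f₂ u) (g f₁ f₂ v) ↔ ec T₁ T₂ u v := by
  unfold ec
  have m1u := g_mem₁_iff f₁ f₂ hcomp hu
  have m1v := g_mem₁_iff f₁ f₂ hcomp hv
  have m2u := g_mem₂_iff f₁ f₂ hcomp hu
  have m2v := g_mem₂_iff f₁ f₂ hcomp hv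
  have he1 : liftE T₁ (g f₁ f₂ u) (g f₁ f₂ v) ↔ liftE T₁ u v := by
    by_cases h1 : u ∈ B₁ <;> by_cases h2 : v ∈ B₁
    · exact g_liftE₁ T₁ f₁ f₂ hf₁ h1 h2
    · exact ⟨fun h => absurd (m1v.1 h.mem_right) h2, fun h => absurd h.mem_right h2⟩
    · exact ⟨fun h => absurd (m1u.1 h.mem_left) h1, fun h => absurd h.mem_left h1⟩
    · exact ⟨fun h => absurd (m1u.1 h.mem_left) h1, fun h => absurd h.mem_left h1⟩
  have he2 : liftE T₂ (g f₁ f₂ u) (g f₁ f₂ v) ↔ liftE T₂ u v := by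
    by_cases h1 : u ∈ B₂ <;> by_cases h2 : v ∈ B₂
    · exact g_liftE₂ T₂ f₁ f₂ hcomp hf₂ h1 h2
    · exact ⟨fun h => absurd (m2v.1 h.mem_right) h2, fun h => absurd h.mem_right h2⟩
    · exact ⟨fun h => absurd (m2u.1 h.mem_left) h1, fun h => absurd h.mem_left h1⟩
    · exact ⟨fun h => absurd (m2u.1 h.mem_left) h1, fun h => absurd h.mem_left h1⟩
  rw [he1, he2, m1u, m1v, m2u, m2v]
  refine or_congr Iff.rfl (or_congr Iff.rfl ?_)
  constructor
  · rintro ⟨h1, h2, h3, h4, h5⟩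
    exact ⟨h1, h2, h3, h4, fun hs =>
      h5 ((g_sp T₁ T₂ f₁ f₂ hcomp hf₁ hf₂ h1 h3).2 hs)⟩
  · rintro ⟨h1, h2, h3, h4, h5⟩
    exact ⟨h1, h2, h3, h4, fun hs =>
      h5 ((g_sp T₁ T₂ f₁ f₂ hcomp hf₁ hf₂ h1 h3).1 hs)⟩

end Auto

end APAaux

/-- APA for finite ω-partite tournaments: given ω-partite tournaments `A ⊆ B₁`, `A ⊆ B₂`
with `B₁ ∩ B₂ = A` (agreement on the intersection), there is an ω-partite tournament `C`
on `B₁ ∪ B₂` extending both, such that any automorphisms `f₁` of `B₁` and `f₂` of `B₂`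
agreeing on `A` extend to a common automorphism of `C`. -/
theorem stmt13 {V : Type*} [Finite V] (B₁ B₂ : Set V)
    (T₁ : PartiteTournament B₁) (T₂ : PartiteTournament B₂)
    (hagree : ∀ (u v : V) (hu₁ : u ∈ B₁) (hu₂ : u ∈ B₂) (hv₁ : v ∈ B₁) (hv₂ : v ∈ B₂),
      T₁.E ⟨u, hu₁⟩ ⟨v, hv₁⟩ ↔ T₂.E ⟨u, hu₂⟩ ⟨v, hv₂⟩) :
    ∃ T : PartiteTournament ↥(B₁ ∪ B₂),
      (∀ (u v : V) (hu : u ∈ B₁) (hv : v ∈ B₁),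
        T.E ⟨u, Set.mem_union_left _ hu⟩ ⟨v, Set.mem_union_left _ hv⟩ ↔
          T₁.E ⟨u, hu⟩ ⟨v, hv⟩) ∧
      (∀ (u v : V) (hu : u ∈ B₂) (hv : v ∈ B₂),
        T.E ⟨u, Set.mem_union_right _ hu⟩ ⟨v, Set.mem_union_right _ hv⟩ ↔
          T₂.E ⟨u, hu⟩ ⟨v, hv⟩) ∧
      ∀ (f₁ : B₁ ≃ B₁) (f₂ : B₂ ≃ B₂),
        (∀ u v, T₁.E (f₁ u) (f₁ v) ↔ T₁.E u v) →
        (∀ u v, T₂.E (f₂ u) (f₂ v) ↔ T₂.E u v) →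
        (∀ (u : V) (hu₁ : u ∈ B₁) (hu₂ : u ∈ B₂),
          (f₁ ⟨u, hu₁⟩ : V) = (f₂ ⟨u, hu₂⟩ : V)) →
        ∃ F : ↥(B₁ ∪ B₂) ≃ ↥(B₁ ∪ B₂),
          (∀ u v, T.E (F u) (F v) ↔ T.E u v) ∧
          (∀ (u : V) (hu : u ∈ B₁),
            (F ⟨u, Set.mem_union_left _ hu⟩ : V) = (f₁ ⟨u, hu⟩ : V)) ∧
          (∀ (u : V) (hu : u ∈ B₂),
            (F ⟨u, Set.mem_union_right _ hu⟩ : V) = (f₂ ⟨u, hu⟩ : V)) := by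
  classical
  open APAaux in
  refine ⟨{
    E := fun x y => ec T₁ T₂ x.1 y.1
    asymm := fun x y h => ec_asymm T₁ T₂ hagree h
    nonadj_equiv := ⟨
      fun x => (nc_iff_R T₁ T₂ hagree x.2 x.2).2 (R_refl T₁ T₂ x.2),
      fun {x y} h => (nc_iff_R T₁ T₂ hagree y.2 x.2).2
        (R_symm T₁ T₂ ((nc_iff_R T₁ T₂ hagree x.2 y.2).1 h)),
      fun {x y z} h h' => (nc_iff_R T₁ T₂ hagree x.2 z.2).2
        (R_trans T₁ T₂ hagree ((nc_iff_R T₁ T₂ hagree x.2 y.2).1 h)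
          ((nc_iff_R T₁ T₂ hagree y.2 z.2).1 h')) ⟩ }, ?_, ?_, ?_⟩
  · intro u v hu hv
    show ec T₁ T₂ u v ↔ _
    rw [ec_iff_left T₁ T₂ hagree hu hv, liftE_iff T₁ hu hv]
  · intro u v hu hv
    show ec T₁ T₂ u v ↔ _
    rw [ec_iff_right T₁ T₂ hagree hu hv, liftE_iff T₂ hu hv]
  · intro f₁ f₂ hf₁ hf₂ hcomp
    have hmem : ∀ x : ↥(B₁ ∪ B₂), g f₁ f₂ x.1 ∈ B₁ ∪ B₂ := fun x =>
      x.2.elim (fun h => Or.inl (g_mem₁ f₁ f₂ h))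
        (fun h => Or.inr (g_mem₂ f₁ f₂ hcomp h))
    have hinj : Function.Injective (fun x : ↥(B₁ ∪ B₂) => (⟨g f₁ f₂ x.1, hmem x⟩ : ↥(B₁ ∪ B₂))) := by
      intro x y h
      exact Subtype.ext (g_injOn f₁ f₂ hcomp x.2 y.2 (congrArg Subtype.val h))
    refine ⟨Equiv.ofBijective _ (Finite.injective_iff_bijective.1 hinj), ?_, ?_, ?_⟩
    · intro u v
      exact g_ec T₁ T₂ f₁ f₂ hcomp hf₁ hf₂ u.2 v.2
    · intro u hu
      exact g_eq₁ f₁ f₂ hu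
    · intro u hu
      exact g_eq₂ f₁ f₂ hcomp hu
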